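/- arXiv:1204.5442 — 3 statements merged into one kernel-verified Lean document; each statement's English description precedes it below -/
import Mathlib

section
/- Let s : ℕ → ℝ satisfy s(0) = 1 and, for all i ≥ 1, s(i) ≤ 5·2^i + 2^i · ∑_{j=1}^{⌊2i/3⌋-1} 2(s(j) - s(j-1)) / 2^(3j/2), where s is nondecreasing, s(j) ≤ 258·2^j for all j ≤ 8, and for all j ≥ 1, s(j) - s(j-1) ≤ s(j-1) + 2·s(⌈2(j-1)/3⌉) + 2. Then s(i) ≤ 258·2^i for all i ≥ 0. -/
noncomputable def B7 : ℕ → ℝ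
  | 0 => 0
  | 1 => 18 / 2.82
  | 2 => 38 / 2.82 ^ 2
  | 3 => 182 / 2.82 ^ 3
  | 4 => 364 / 2.82 ^ 4
  | 5 => 1036 / 2.82 ^ 5
  | 6 => 3110 / 2.82 ^ 6
  | 7 => 6220 / 2.82 ^ 7
  | 8 => 15410 / 2.82 ^ 8
  | j => 516 * (100 / 141) ^ j

lemma B7_ge9 (n : ℕ) : B7 (n + 9) = 516 * (100 / 141) ^ (n + 9) := rfl

lemma B7_nonneg (j : ℕ) : 0 ≤ B7 j := by
  match j with
  | 0 => norm_num [B7]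
  | 1 => norm_num [B7]
  | 2 => norm_num [B7]
  | 3 => norm_num [B7]
  | 4 => norm_num [B7]
  | 5 => norm_num [B7]
  | 6 => norm_num [B7]
  | 7 => norm_num [B7]
  | 8 => norm_num [B7]
  | n + 9 => rw [B7_ge9]; positivity

lemma geom_tail7 (M : ℕ) :
    ∑ j ∈ Finset.Ioc 8 M, ((100:ℝ) / 141) ^ j ≤ (100 / 141) ^ 9 * (141 / 41) := by
  rcases le_or_gt M 8 with h | h
  · rw [Finset.Ioc_eq_empty (by omega), Finset.sum_empty]
    positivity
  · have he : Finset.Ioc 8 M = Finset.Ico 9 (M + 1) := by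
      rw [← Finset.Ico_add_one_add_one_eq_Ioc]; rfl
    rw [he, Finset.sum_Ico_eq_sum_range]
    have hrw : ∀ k, ((100:ℝ) / 141) ^ (9 + k) = (100 / 141) ^ 9 * (100 / 141) ^ k :=
      fun k => pow_add _ _ _
    simp_rw [hrw]
    rw [← Finset.mul_sum]
    have hg : ∑ k ∈ Finset.range (M + 1 - 9), ((100:ℝ) / 141) ^ k ≤ 141 / 41 := by
      rw [geom_sum_eq (by norm_num : ((100:ℝ)/141) ≠ 1)]
      rw [div_le_iff_of_neg (by norm_num : ((100:ℝ)/141 - 1) < 0)]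
      have : (0:ℝ) ≤ (100/141) ^ (M + 1 - 9) := by positivity
      nlinarith
    have h9 : (0:ℝ) ≤ (100/141) ^ 9 := by positivity
    nlinarith

lemma sum_B7_le (m : ℕ) : ∑ j ∈ Finset.Icc 1 m, B7 j ≤ 127 := by
  have head : ∑ j ∈ Finset.Icc 1 8, B7 j ≤ 46 := by
    rw [show Finset.Icc 1 8 = ({1,2,3,4,5,6,7,8} : Finset ℕ) from rfl]
    rw [Finset.sum_insert (by decide), Finset.sum_insert (by decide),
      Finset.sum_insert (by decide), Finset.sum_insert (by decide),
      Finset.sum_insert (by decide), Finset.sum_insert (by decide),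
      Finset.sum_insert (by decide), Finset.sum_singleton]
    norm_num [B7]
  rcases le_or_gt m 8 with h | h
  · calc ∑ j ∈ Finset.Icc 1 m, B7 j
        ≤ ∑ j ∈ Finset.Icc 1 8, B7 j := by
          apply Finset.sum_le_sum_of_subset_of_nonneg
          · exact Finset.Icc_subset_Icc_right h
          · intro j _ _; exact B7_nonneg j
      _ ≤ 127 := by linarith
  · have hsplit : ∑ j ∈ Finset.Ioc 0 8, B7 j + ∑ j ∈ Finset.Ioc 8 m, B7 j
        = ∑ j ∈ Finset.Ioc 0 m, B7 j :=
      Finset.sum_Ioc_consecutive _ (by omega) (by omega)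
    have hIcc : Finset.Icc 1 m = Finset.Ioc 0 m := rfl
    have hIcc8 : Finset.Icc 1 8 = Finset.Ioc 0 8 := rfl
    have tail : ∑ j ∈ Finset.Ioc 8 m, B7 j ≤ 81 := by
      have heq : ∀ j ∈ Finset.Ioc 8 m, B7 j = 516 * ((100:ℝ)/141) ^ j := by
        intro j hj
        simp only [Finset.mem_Ioc] at hj
        obtain ⟨n, rfl⟩ : ∃ n, j = n + 9 := ⟨j - 9, by omega⟩
        exact B7_ge9 n
      rw [Finset.sum_congr rfl heq, ← Finset.mul_sum]
      nlinarith [geom_tail7 m]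
    rw [hIcc, ← hsplit, ← hIcc8]
    linarith

/-- Inductive bound `s(i) ≤ 258·2^i` for the SUES length recurrence (λ = 2). -/
theorem stmt7 (s : ℕ → ℝ) (h0 : s 0 = 1)
    (hrec : ∀ i : ℕ, 1 ≤ i → s i ≤ 5 * 2 ^ i + 2 ^ i *
        ∑ j ∈ Finset.Icc 1 (2 * i / 3 - 1),
          2 * (s j - s (j - 1)) / (2:ℝ) ^ ((3 * (j:ℝ)) / 2))
    (hmono : Monotone s)
    (hinit : ∀ j : ℕ, j ≤ 8 → s j ≤ 258 * 2 ^ j)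
    (hgap : ∀ j : ℕ, 1 ≤ j →
        s j - s (j - 1) ≤ s (j - 1) + 2 * s ((2 * (j - 1) + 2) / 3) + 2) :
    ∀ i : ℕ, s i ≤ 258 * 2 ^ i := by
  have hge1 : ∀ j : ℕ, (1:ℝ) ≤ s j := fun j => h0 ▸ hmono (Nat.zero_le j)
  have hpow : ∀ j : ℕ, ((2.82:ℝ))^j ≤ (2:ℝ) ^ ((3 * (j:ℝ)) / 2) := by
    intro j
    have hb : (0:ℝ) ≤ 2 := by norm_num
    have h1 : (2:ℝ) ^ ((3 * (j:ℝ)) / 2) = ((2:ℝ) ^ ((3:ℝ)/2)) ^ j := by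
      rw [← Real.rpow_natCast ((2:ℝ) ^ ((3:ℝ)/2)) j, ← Real.rpow_mul hb]
      congr 1; ring
    have h2 : ((2:ℝ) ^ ((3:ℝ)/2))^2 = 8 := by
      rw [← Real.rpow_natCast ((2:ℝ) ^ ((3:ℝ)/2)) 2, ← Real.rpow_mul hb]
      norm_num
    have h3 : (0:ℝ) < (2:ℝ) ^ ((3:ℝ)/2) := Real.rpow_pos_of_pos (by norm_num) _
    have h4 : (2.82:ℝ) ≤ (2:ℝ) ^ ((3:ℝ)/2) := by nlinarith
    rw [h1]
    exact pow_le_pow_left₀ (by norm_num) h4 j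
  have hterm : ∀ j : ℕ, ∀ U : ℝ, s j ≤ U →
      2 * (s j - s (j - 1)) / (2:ℝ) ^ ((3 * (j:ℝ)) / 2) ≤ 2 * (U - 1) / 2.82 ^ j := by
    intro j U hU
    have hg1 := hge1 (j - 1)
    have hmon := hmono (Nat.sub_le j 1)
    apply div_le_div₀ (by linarith) (by linarith) (by positivity) (hpow j)
  -- small-index bounds via hrec
  have hs1 : s 1 ≤ 10 := by
    have h := hrec 1 le_rfl
    rw [show (2 * 1 / 3 - 1 : ℕ) = 0 from rfl, Finset.Icc_eq_empty (by omega),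
      Finset.sum_empty] at h
    norm_num at h; linarith
  have hs2 : s 2 ≤ 20 := by
    have h := hrec 2 (by norm_num)
    rw [show (2 * 2 / 3 - 1 : ℕ) = 0 from rfl, Finset.Icc_eq_empty (by omega),
      Finset.sum_empty] at h
    norm_num at h; linarith
  have t1 := hterm 1 10 hs1
  have hs3 : s 3 ≤ 92 := by
    have h := hrec 3 (by norm_num)
    rw [show Finset.Icc 1 (2 * 3 / 3 - 1) = ({1} : Finset ℕ) from rfl,
      Finset.sum_singleton] at h
    norm_num at h t1 ⊢
    linarith
  have hs4 : s 4 ≤ 183 := by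
    have h := hrec 4 (by norm_num)
    rw [show Finset.Icc 1 (2 * 4 / 3 - 1) = ({1} : Finset ℕ) from rfl,
      Finset.sum_singleton] at h
    norm_num at h t1 ⊢
    linarith
  have t2 := hterm 2 20 hs2
  have hs5 : s 5 ≤ 519 := by
    have h := hrec 5 (by norm_num)
    rw [show Finset.Icc 1 (2 * 5 / 3 - 1) = ({1, 2} : Finset ℕ) from rfl,
      Finset.sum_insert (by decide), Finset.sum_singleton] at h
    norm_num at h t1 t2 ⊢
    linarith
  have t3 := hterm 3 92 hs3
  have hs6 : s 6 ≤ 1556 := by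
    have h := hrec 6 (by norm_num)
    rw [show Finset.Icc 1 (2 * 6 / 3 - 1) = ({1, 2, 3} : Finset ℕ) from rfl,
      Finset.sum_insert (by decide), Finset.sum_insert (by decide),
      Finset.sum_singleton] at h
    norm_num at h t1 t2 t3 ⊢
    linarith
  have hs7 : s 7 ≤ 3111 := by
    have h := hrec 7 (by norm_num)
    rw [show Finset.Icc 1 (2 * 7 / 3 - 1) = ({1, 2, 3} : Finset ℕ) from rfl,
      Finset.sum_insert (by decide), Finset.sum_insert (by decide),
      Finset.sum_singleton] at h
    norm_num at h t1 t2 t3 ⊢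
    linarith
  have t4 := hterm 4 183 hs4
  have hs8 : s 8 ≤ 7706 := by
    have h := hrec 8 (by norm_num)
    rw [show Finset.Icc 1 (2 * 8 / 3 - 1) = ({1, 2, 3, 4} : Finset ℕ) from rfl,
      Finset.sum_insert (by decide), Finset.sum_insert (by decide),
      Finset.sum_insert (by decide), Finset.sum_singleton] at h
    norm_num at h t1 t2 t3 t4 ⊢
    linarith
  -- main strong induction
  intro i
  induction i using Nat.strong_induction_on with
  | _ i IH =>
    rcases le_or_gt i 8 with h8 | h9
    · exact hinit i h8
    · have h := hrec i (by omega)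
      have hmi : 2 * i / 3 - 1 < i := by omega
      have hsum : ∑ j ∈ Finset.Icc 1 (2 * i / 3 - 1),
          2 * (s j - s (j - 1)) / (2:ℝ) ^ ((3 * (j:ℝ)) / 2) ≤ 127 := by
        refine le_trans (Finset.sum_le_sum ?_) (sum_B7_le (2 * i / 3 - 1))
        intro j hj
        simp only [Finset.mem_Icc] at hj
        obtain ⟨hj1, hj2⟩ := hj
        rcases le_or_gt j 8 with hj8 | hj9
        · interval_cases j
          · refine le_trans (hterm 1 10 hs1) ?_; norm_num [B7]
          · refine le_trans (hterm 2 20 hs2) ?_; norm_num [B7]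
          · refine le_trans (hterm 3 92 hs3) ?_; norm_num [B7]
          · refine le_trans (hterm 4 183 hs4) ?_; norm_num [B7]
          · refine le_trans (hterm 5 519 hs5) ?_; norm_num [B7]
          · refine le_trans (hterm 6 1556 hs6) ?_; norm_num [B7]
          · refine le_trans (hterm 7 3111 hs7) ?_; norm_num [B7]
          · refine le_trans (hterm 8 7706 hs8) ?_; norm_num [B7]
        · have hU := IH j (by omega)
          refine (hterm j (258 * 2 ^ j) hU).trans ?_
          obtain ⟨n, rfl⟩ : ∃ n, j = n + 9 := ⟨j - 9, by omega⟩
          rw [B7_ge9]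
          have hpow : ((100:ℝ)/141) ^ (n + 9) = 2 ^ (n + 9) / 2.82 ^ (n + 9) := by
            rw [show ((100:ℝ)/141) = 2 / 2.82 by norm_num, div_pow]
          rw [hpow, ← mul_div_assoc,
            div_le_div_iff_of_pos_right (by positivity : (0:ℝ) < 2.82 ^ (n + 9))]
          nlinarith [pow_pos (show (0:ℝ) < 2 by norm_num) (n + 9)]
      have hp : (0:ℝ) < 2 ^ i := by positivity
      have h2 : (2:ℝ) ^ i * (∑ j ∈ Finset.Icc 1 (2 * i / 3 - 1),
          2 * (s j - s (j - 1)) / (2:ℝ) ^ ((3 * (j:ℝ)) / 2)) ≤ 2 ^ i * 127 :=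
        mul_le_mul_of_nonneg_left hsum (le_of_lt hp)
      linarith
end

section
/- Let G be a d-regular graph with an edge numbering, and consider the walk semantics of exploration sequences: from a current directed edge (u,v) where (u,v) is the s-th edge at v, the offset τ moves to the (s+τ mod d)-th edge of v. If executing τ = τ₁⋯τ_k starting from directed edge e₀ produces the sequence of directed edges e₀, e₁, …, e_k, then executing the sequence 0 τ⁻¹ 0 starting from e_k produces the sequence e_k, ẽ_k, ẽ_{k−1}, …, ẽ₀, e₀, where ẽ denotes the reverse of directed edge e and τ⁻¹ = τ_k⁻¹⋯τ₁⁻¹ with t⁻¹ = d − t mod d. -/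
private lemma scanl_getLast?_aux {E S : Type*} (f : E → S → E) :
    ∀ (l : List S) (a : E), (List.scanl f a l).getLast? = some (l.foldl f a) := by
  intro l
  induction l with
  | nil => intro a; simp
  | cons t ts ih =>
    intro a
    rw [List.scanl_cons, List.foldl_cons]
    cases hts : List.scanl f (f a t) ts with
    | nil => exact absurd hts (by cases ts <;> simp [List.scanl])
    | cons b bs =>
      rw [List.getLast?_cons_cons, ← hts, ih]

private lemma scanl_head?_aux {E S : Type*} (f : E → S → E) (l : List S) (a : E) :
    (List.scanl f a l).head? = some a := by
  cases l <;> simp [List.scanl]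

private lemma scanl_concat_aux {E S : Type*} (f : E → S → E) :
    ∀ (l : List S) (a : E) (x : S),
      List.scanl f a (l ++ [x]) = List.scanl f a l ++ [f (l.foldl f a) x] := by
  intro l
  induction l with
  | nil => intros; simp [List.scanl]
  | cons t ts ih => intro a x; simp [List.scanl_cons, ih]

private lemma key_aux {d : ℕ} {E : Type*} (rev : E → E)
    (step : E → ZMod d → E)
    (hback : ∀ (e : E) (t : ZMod d), step (rev (step e t)) (-t) = rev e) :
    ∀ (τs : List (ZMod d)) (e0 : E),
      List.scanl step (rev (τs.foldl step e0)) ((τs.map (fun t => -t)).reverse)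
        = ((τs.scanl step e0).map rev).reverse := by
  intro τs
  induction τs with
  | nil => intro e0; simp [List.scanl]
  | cons t ts ih =>
    intro e0
    simp only [List.map_cons, List.reverse_cons, List.foldl_cons, List.scanl_cons]
    rw [scanl_concat_aux]
    have hfold : ((ts.map (fun t => -t)).reverse).foldl step
        (rev (ts.foldl step (step e0 t))) = rev (step e0 t) := by
      have h1 := scanl_getLast?_aux step ((ts.map (fun t => -t)).reverse)
        (rev (ts.foldl step (step e0 t)))
      rw [ih (step e0 t)] at h1
      rw [List.getLast?_reverse] at h1
      rw [List.head?_map, scanl_head?_aux] at h1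
      simpa using h1.symm
    rw [hfold, hback, ih (step e0 t)]

/-- Backtracking: if executing `τ` from `e₀` yields edges `e₀,…,e_k`, then executing
`0 τ⁻¹ 0` from `e_k` yields `e_k, ẽ_k, …, ẽ₀, e₀`. The walk semantics is abstracted
by a step function `step e t` (the edge with port `entry-port + t` at the head of `e`)
together with the reversal `rev` of directed edges, satisfying `step e 0 = rev e`
and `step (rev (step e t)) (-t) = rev e`. -/
theorem stmt12 (d : ℕ) (hd : 3 ≤ d) {E : Type*} (rev : E → E)
    (hrevinv : Function.Involutive rev)
    (step : E → ZMod d → E)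
    (h0 : ∀ e : E, step e 0 = rev e)
    (hback : ∀ (e : E) (t : ZMod d), step (rev (step e t)) (-t) = rev e)
    (τs : List (ZMod d)) (e0 ek : E)
    (hek : (τs.scanl step e0).getLast? = some ek) :
    List.scanl step ek (((0 : ZMod d) :: (τs.map (fun t => -t)).reverse) ++ [0])
      = ek :: (((τs.scanl step e0).map rev).reverse ++ [e0]) := by
  have hek' : ek = τs.foldl step e0 := by
    rw [scanl_getLast?_aux] at hek
    exact (Option.some_injective _ hek).symm
  have hkey := key_aux rev step hback τs e0
  have hfold : ((τs.map (fun t => -t)).reverse).foldl step (rev ek) = rev e0 := by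
    have h1 := scanl_getLast?_aux step ((τs.map (fun t => -t)).reverse) (rev ek)
    rw [hek', hkey, List.getLast?_reverse, List.head?_map, scanl_head?_aux] at h1
    subst hek'
    simpa using h1.symm
  rw [List.cons_append, List.scanl_cons, h0, scanl_concat_aux, hfold, h0,
    hrevinv e0, hek', hkey]
end

section
/- Define S : ℕ → List as follows over an alphabet containing symbols u₁, u₂, … and 0, with S(2^0) = [u₁], and for n = 2^i (i ≥ 1), S(n) = u₁ ++ B(r₁) ++ u₂ ++ B(r₂) ++ ⋯ ++ u_{n−1} ++ B(r_{n−1}) ++ u_n where B(r) = S(r) ++ [0] ++ reverse-inverse of S(r) ++ [0] and r_k = max{2^j : 2^(3j/2) ≤ k}. Then for all powers of two k < n, S(k) is a prefix of S(n), provided U_k is a prefix of U_n. -/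
/-- Prefix closure of the recursively constructed SUES family: for powers of two
`2^p ≤ 2^q`, `S (2^p)` is a prefix of `S (2^q)`. -/
theorem stmt14 {α : Type*} (u : ℕ → α) (z : α) (inv : α → α)
    (r : ℕ → ℕ)
    (hr : ∀ k : ℕ, 1 ≤ k → IsGreatest {x : ℕ | ∃ j : ℕ,
        x = 2 ^ j ∧ (2:ℝ) ^ ((3 * (j:ℝ)) / 2) ≤ (k:ℝ)} (r k))
    (S : ℕ → List α)
    (hS1 : S 1 = [u 1])
    (hSn : ∀ i : ℕ, 1 ≤ i → S (2 ^ i) =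
        ((List.range (2 ^ i - 1)).map (fun k =>
          u (k + 1) :: (S (r (k + 1)) ++ [z] ++
            ((S (r (k + 1))).map inv).reverse ++ [z]))).flatten ++ [u (2 ^ i)]) :
    ∀ p q : ℕ, p ≤ q → S (2 ^ p) <+: S (2 ^ q) := by
  set f : ℕ → List α := fun k =>
    u (k + 1) :: (S (r (k + 1)) ++ [z] ++
      ((S (r (k + 1))).map inv).reverse ++ [z]) with hf
  have step : ∀ p : ℕ, S (2 ^ p) <+: S (2 ^ (p + 1)) := by
    intro p
    rcases Nat.eq_zero_or_pos p with hp | hp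
    · subst hp
      rw [pow_zero, hS1, hSn 1 le_rfl]
      refine ⟨(S (r 1) ++ [z] ++ ((S (r 1)).map inv).reverse ++ [z]) ++ [u (2 ^ 1)], ?_⟩
      simp [f, List.range_succ]
    · rw [hSn p hp, hSn (p + 1) (by omega)]
      have h2p : 1 ≤ 2 ^ p := Nat.one_le_two_pow
      have hsplit : 2 ^ (p + 1) - 1 = (2 ^ p - 1) + 2 ^ p := by
        have : 2 ^ (p + 1) = 2 ^ p + 2 ^ p := by ring
        omega
      rw [hsplit, List.range_add, List.map_append]
      simp only [List.flatten_append]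
      have hpos : 2 ^ p = (2 ^ p - 1) + 1 := by omega
      have hrange : List.range (2 ^ p) = 0 :: (List.range (2 ^ p - 1)).map Nat.succ := by
        rw [hpos, List.range_succ_eq_map]
        simp
      rw [hrange]
      simp only [List.map_cons, List.map_map, List.flatten_cons]
      refine ⟨?_, ?_⟩
      · exact (S (r (2 ^ p - 1 + 0 + 1)) ++ [z] ++
          ((S (r (2 ^ p - 1 + 0 + 1))).map inv).reverse ++ [z]) ++
          (((List.range (2 ^ p - 1)).map ((f ∘ fun x => (2 ^ p - 1) + x) ∘ Nat.succ)).flatten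
            ++ [u (2 ^ (p + 1))])
      · simp only [f, Function.comp_def, List.flatten]
        have : 2 ^ p - 1 + 0 + 1 = 2 ^ p := by omega
        rw [this]
        simp [List.append_assoc]
  intro p q hpq
  induction q with
  | zero => simp_all
  | succ q ih =>
    rcases Nat.lt_or_ge p (q + 1) with h | h
    · exact (ih (by omega)).trans (step q)
    · have : p = q + 1 := by omega
      subst this
      exact List.prefix_rfl
end
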